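/- For n ≥ 2 and 0 ≤ s < r ≤ m, the numbers c_{n,m,r,s} and d_{n,m,r,s} satisfy d_{n,m,r,s} = d_{n−1,m,r,s} + Σ_{i=s+1}^{r−1} d_{n−1,m−1,i,s} + Σ_{i=0}^{s} Σ_{j=i}^{r} c_{n−2,m−1,j,i}; moreover, for n ≥ 2 and 0 ≤ r ≤ m, c_{n,m,r,r} = d_{n,m,r,r} + Σ_{i=0}^{r−1} Σ_{j=i}^{r} c_{n−1,m−1,j,i}. -/

import Mathlib

/-- Number of ascents of a sequence of non-negative integers:
indices `j` with `x j < x (j+1)`. -/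
def ascents (l : List ℕ) : ℕ :=
  ((l.zip l.tail).filter (fun p => p.1 < p.2)).length

/-- `x` is an ascent sequence: it starts with 0 and each subsequent letter is at most
one more than the number of ascents of the preceding prefix. -/
def IsAscentSeq (x : List ℕ) : Prop :=
  (∀ h : 0 < x.length, x.get ⟨0, h⟩ = 0) ∧
  ∀ i : Fin x.length, 0 < (i : ℕ) → x.get i ≤ ascents (x.take (i : ℕ)) + 1

/-- `p` contains the pattern `t`: `p` has a subsequence order-isomorphic to `t`. -/
def Contains (p t : List ℕ) : Prop :=
  ∃ f : Fin t.length → Fin p.length, StrictMono f ∧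
    ∀ i j : Fin t.length, t.get i < t.get j ↔ p.get (f i) < p.get (f j)

/-- `p` avoids the pattern `t`. -/
def Avoids (p t : List ℕ) : Prop := ¬ Contains p t

/-- `cA n m r s` is the number of 210-avoiding ascent sequences of length `n` with
exactly `m` ascents, largest letter `r`, and last letter `s`. -/
noncomputable def cA (n m r s : ℕ) : ℕ :=
  {x : List ℕ | x.length = n ∧ IsAscentSeq x ∧ Avoids x [2, 1, 0] ∧
    ascents x = m ∧ x.foldr max 0 = r ∧ x.getLast? = some s}.ncard

/-- `dA n m r s` is the number of 210-avoiding ascent sequences of length `n` with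
exactly `m` ascents, largest letter `r`, last letter `s`, and next-to-last
letter equal to `r`. -/
noncomputable def dA (n m r s : ℕ) : ℕ :=
  {x : List ℕ | x.length = n ∧ IsAscentSeq x ∧ Avoids x [2, 1, 0] ∧
    ascents x = m ∧ x.foldr max 0 = r ∧ x.getLast? = some s ∧
    x.dropLast.getLast? = some r}.ncard
open List

section Aux

/-! ### Basic lemmas about `ascents` -/

lemma ascents_nil : ascents [] = 0 := rfl
lemma ascents_singleton (a : ℕ) : ascents [a] = 0 := rfl

lemma ascents_cons_cons (a b : ℕ) (l : List ℕ) :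
    ascents (a :: b :: l) = (if a < b then 1 else 0) + ascents (b :: l) := by
  simp only [ascents, List.zip_cons_cons, List.tail_cons, List.filter_cons]
  split_ifs with h <;> simp_all <;> omega

lemma ascents_append (l : List ℕ) (b a : ℕ) (h : l.getLast? = some b) :
    ascents (l ++ [a]) = ascents l + if b < a then 1 else 0 := by
  induction l with
  | nil => simp at h
  | cons c l ih =>
    cases l with
    | nil =>
      simp only [List.getLast?_singleton, Option.some.injEq] at h
      subst h
      simp [ascents_cons_cons, ascents_singleton, ascents_nil]
    | cons d l' =>
      have h' : (d::l').getLast? = some b := by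
        rwa [List.getLast?_cons_cons] at h
      have e1 : (c :: d :: l') ++ [a] = c :: ((d :: l') ++ [a]) := by simp
      have e2 : (d :: l') ++ [a] = d :: (l' ++ [a]) := by simp
      rw [e1, e2, ascents_cons_cons, ← e2, ih h', ascents_cons_cons]
      omega

lemma ascents_le_length (l : List ℕ) : ascents l ≤ l.length := by
  refine le_trans (List.length_filter_le _ _) ?_
  simp [List.length_zip]

lemma ascents_concat_le (l : List ℕ) (a : ℕ) : ascents l ≤ ascents (l ++ [a]) := by
  rcases hl : l.getLast? with _ | b
  · rw [List.getLast?_eq_none_iff.mp hl]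
    simp [ascents_nil]
  · rw [ascents_append l b a hl]
    omega

/-! ### Pattern avoidance via sublists -/

/-- No strictly decreasing subsequence of length 3. -/
def N3 (l : List ℕ) : Prop := ∀ a b c : ℕ, [a,b,c] <+ l → b < a → c < b → False

/-- Every descent pair has its smaller element at most `s`. -/
def N2 (s : ℕ) (l : List ℕ) : Prop := ∀ a b : ℕ, [a,b] <+ l → b < a → b ≤ s

lemma contains210_iff (p : List ℕ) :
    Contains p [2,1,0] ↔ ∃ a b c, [a,b,c] <+ p ∧ b < a ∧ c < b := by
  constructor
  · rintro ⟨f, hmono, hiff⟩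
    refine ⟨p.get (f ⟨0, by norm_num⟩), p.get (f ⟨1, by norm_num⟩), p.get (f ⟨2, by norm_num⟩),
      ?_, ?_, ?_⟩
    · rw [List.sublist_iff_exists_fin_orderEmbedding_get_eq]
      refine ⟨OrderEmbedding.ofStrictMono (fun i => f (Fin.cast rfl i))
        (fun i j hij => hmono hij), fun ix => ?_⟩
      fin_cases ix <;> rfl
    · exact (hiff ⟨1, by norm_num⟩ ⟨0, by norm_num⟩).mp (by decide)
    · exact (hiff ⟨2, by norm_num⟩ ⟨1, by norm_num⟩).mp (by decide)
  · rintro ⟨a, b, c, hsub, hba, hcb⟩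
    rw [List.sublist_iff_exists_fin_orderEmbedding_get_eq] at hsub
    obtain ⟨f, hf⟩ := hsub
    refine ⟨fun i => f (Fin.cast rfl i), fun i j hij => f.strictMono hij,
      fun i j => ?_⟩
    have h0 : p.get (f ⟨0, by simp⟩) = a := (hf ⟨0, by simp⟩).symm
    have h1 : p.get (f ⟨1, by simp⟩) = b := (hf ⟨1, by simp⟩).symm
    have h2 : p.get (f ⟨2, by simp⟩) = c := (hf ⟨2, by simp⟩).symm
    fin_cases i <;> fin_cases j <;>
      simp_all <;> omega

lemma avoids210_iff (p : List ℕ) : Avoids p [2,1,0] ↔ N3 p := by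
  rw [Avoids, contains210_iff]
  constructor
  · intro h a b c hs hba hcb; exact h ⟨a, b, c, hs, hba, hcb⟩
  · rintro h ⟨a, b, c, hs, hba, hcb⟩; exact h a b c hs hba hcb

lemma sublist_concat_iff {l' l : List ℕ} {a : ℕ} :
    l' <+ l ++ [a] ↔ l' <+ l ∨ ∃ l'', l' = l'' ++ [a] ∧ l'' <+ l := by
  rw [List.sublist_append_iff]
  constructor
  · rintro ⟨l₁, l₂, rfl, h₁, h₂⟩
    rcases List.sublist_singleton.mp h₂ with rfl | rfl
    · left; simpa using h₁
    · right; exact ⟨l₁, rfl, h₁⟩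
  · rintro (h | ⟨l'', rfl, h⟩)
    · exact ⟨l', [], by simp, h, List.nil_sublist _⟩
    · exact ⟨l'', [a], rfl, h, List.Sublist.refl _⟩

lemma N3_concat (u : List ℕ) (c : ℕ) : N3 (u ++ [c]) ↔ N3 u ∧ N2 c u := by
  constructor
  · intro h
    refine ⟨fun a b c' hs => h a b c' (hs.trans (List.sublist_append_left _ _)), ?_⟩
    intro a b hs hba
    by_contra hbc
    exact h a b c (by simpa using hs.append (List.Sublist.refl [c])) hba (by omega)
  · rintro ⟨h3, h2⟩ a b c' hs hba hcb
    rcases sublist_concat_iff.mp hs with hs' | ⟨l'', he, hs'⟩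
    · exact h3 a b c' hs' hba hcb
    · have : l'' = [a, b] ∧ c' = c := by
        rcases l'' with _ | ⟨x, _ | ⟨y, _ | _⟩⟩ <;> simp_all
      obtain ⟨rfl, rfl⟩ := this
      have := h2 a b hs' hba
      omega

lemma N2_concat (s : ℕ) (u : List ℕ) (c : ℕ) :
    N2 s (u ++ [c]) ↔ N2 s u ∧ (∀ a ∈ u, c < a → c ≤ s) := by
  constructor
  · intro h
    refine ⟨fun a b hs hba => h a b (hs.trans (List.sublist_append_left _ _)) hba, ?_⟩
    intro a ha hca
    exact h a c (by simpa using (List.singleton_sublist.mpr ha).append (List.Sublist.refl [c])) hca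
  · rintro ⟨h2, hc⟩ a b hs hba
    rcases sublist_concat_iff.mp hs with hs' | ⟨l'', he, hs'⟩
    · exact h2 a b hs' hba
    · have : l'' = [a] ∧ b = c := by
        rcases l'' with _ | ⟨x, _ | _⟩ <;> simp_all
      obtain ⟨rfl, rfl⟩ := this
      exact hc a (List.singleton_sublist.mp hs') hba

lemma N2.mono {s t : ℕ} {u : List ℕ} (h : N2 s u) (hst : s ≤ t) : N2 t u :=
  fun a b hs hba => le_trans (h a b hs hba) hst

/-! ### Lemmas about `IsAscentSeq` and `foldr max` -/

lemma isAscentSeq_concat {u : List ℕ} (hu : u ≠ []) (a : ℕ) :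
    IsAscentSeq (u ++ [a]) ↔ IsAscentSeq u ∧ a ≤ ascents u + 1 := by
  have hu0 : 0 < u.length := List.length_pos_iff.mpr hu
  constructor
  · rintro ⟨h0, hi⟩
    refine ⟨⟨?_, ?_⟩, ?_⟩
    · intro h
      have := h0 (by simp)
      simp only [List.get_eq_getElem] at this ⊢
      rwa [List.getElem_append_left h] at this
    · intro i hi0
      have hlt : (i : ℕ) < (u ++ [a]).length := by simp
      have := hi ⟨i, hlt⟩ hi0
      simp only [List.get_eq_getElem] at this ⊢
      rwa [List.getElem_append_left i.isLt,
        List.take_append_of_le_length (le_of_lt i.isLt)] at this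
    · have hlt : u.length < (u ++ [a]).length := by simp
      have := hi ⟨u.length, hlt⟩ hu0
      simp only [List.get_eq_getElem] at this
      rwa [List.getElem_concat_length rfl, List.take_left] at this
  · rintro ⟨⟨h0, hi⟩, ha⟩
    refine ⟨?_, ?_⟩
    · intro h
      have := h0 hu0
      simp only [List.get_eq_getElem] at this ⊢
      rwa [List.getElem_append_left hu0]
    · rintro ⟨i, hilt⟩ hi0
      simp only [List.length_append, List.length_singleton] at hilt
      rcases Nat.lt_or_ge i u.length with h | h
      · have := hi ⟨i, h⟩ hi0
        simp only [List.get_eq_getElem] at this ⊢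
        rwa [List.getElem_append_left h, List.take_append_of_le_length (le_of_lt h)]
      · have hieq : i = u.length := by omega
        subst hieq
        simp only [List.get_eq_getElem]
        rwa [List.getElem_concat_length rfl, List.take_left]

lemma isAscentSeq_dropLast {u : List ℕ} {a : ℕ} (h : IsAscentSeq (u ++ [a])) :
    IsAscentSeq u := by
  rcases eq_or_ne u [] with rfl | hu
  · exact ⟨fun h => absurd h (by simp), fun i _ => absurd i.2 (by simp)⟩
  · exact ((isAscentSeq_concat hu a).mp h).1

lemma isAscentSeq_head {u : List ℕ} {a : ℕ} (h : IsAscentSeq ([a] ++ u)) : a = 0 := by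
  have := h.1 (by simp)
  simpa using this

lemma last_le_ascents {u : List ℕ} {b : ℕ} (h : IsAscentSeq u) (hb : u.getLast? = some b) :
    b ≤ ascents u + 1 := by
  have hu : u ≠ [] := by rintro rfl; simp at hb
  have hd : u.dropLast ++ [b] = u := List.dropLast_append_getLast? b hb
  rcases eq_or_ne u.dropLast [] with hd0 | hd0
  · rw [hd0] at hd
    simp only [List.nil_append] at hd
    have : b = 0 := isAscentSeq_head (u := []) (by simpa [hd.symm] using h)
    omega
  · have h1 : b ≤ ascents u.dropLast + 1 := ((isAscentSeq_concat hd0 b).mp (by rwa [hd])).2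
    have h2 : ascents u.dropLast ≤ ascents (u.dropLast ++ [b]) := ascents_concat_le _ _
    rw [hd] at h2
    omega

lemma foldr_max_init (u : List ℕ) (b : ℕ) :
    u.foldr max b = max (u.foldr max 0) b := by
  induction u with
  | nil => simp
  | cons c u ih => simp only [List.foldr_cons, ih]; omega

lemma foldr_max_concat (u : List ℕ) (a : ℕ) :
    (u ++ [a]).foldr max 0 = max (u.foldr max 0) a := by
  rw [List.foldr_append, List.foldr_cons, List.foldr_nil, foldr_max_init]
  omega

lemma le_foldr_max {a : ℕ} {u : List ℕ} (h : a ∈ u) : a ≤ u.foldr max 0 := by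
  induction u with
  | nil => simp at h
  | cons c u ih =>
    rcases List.mem_cons.mp h with rfl | h
    · simp only [List.foldr_cons]; omega
    · have := ih h; simp only [List.foldr_cons]; omega

lemma foldr_max_mem {u : List ℕ} (hu : u ≠ []) : u.foldr max 0 ∈ u := by
  induction u with
  | nil => simp at hu
  | cons c u ih =>
    rcases eq_or_ne u [] with rfl | h
    · simp
    · have := ih h
      simp only [List.foldr_cons]
      rcases Nat.le_total c (u.foldr max 0) with hc | hc
      · rw [Nat.max_eq_right hc]; exact List.mem_cons_of_mem _ this
      · rw [Nat.max_eq_left hc]; exact List.mem_cons_self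

lemma entry_le_length {u : List ℕ} (h : IsAscentSeq u) : ∀ x ∈ u, x ≤ u.length := by
  intro x hx
  obtain ⟨i, rfl⟩ := List.mem_iff_get.mp hx
  rcases Nat.eq_zero_or_pos i with h0 | h0
  · have hp : 0 < u.length := i.pos
    have : i = ⟨0, hp⟩ := Fin.ext h0
    rw [this, h.1 hp]
    omega
  · have h1 := h.2 i h0
    have h2 := ascents_le_length (u.take i)
    have hlt := i.isLt
    have h3 : (u.take (i : ℕ)).length = (i : ℕ) := by
      rw [List.length_take]
      omega
    omega

/-! ### Finiteness and cardinality tools -/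

lemma finite_bdd (n B : ℕ) : {l : List ℕ | l.length = n ∧ ∀ x ∈ l, x ≤ B}.Finite := by
  induction n with
  | zero =>
    refine Set.Finite.subset (Set.finite_singleton []) ?_
    rintro l ⟨hl, -⟩
    simpa using List.length_eq_zero_iff.mp hl
  | succ n ih =>
    refine Set.Finite.subset (Set.Finite.image (fun p : ℕ × List ℕ => p.1 :: p.2)
      ((Set.finite_Iic B).prod ih)) ?_
    rintro l ⟨hl, hb⟩
    rcases l with _ | ⟨c, t⟩
    · simp at hl
    · refine ⟨(c, t), ⟨?_, ?_, ?_⟩, rfl⟩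
      · exact hb c (by simp)
      · simpa using hl
      · exact fun x hx => hb x (List.mem_cons_of_mem _ hx)

lemma ncard_biUnion {ι : Type} (t : Finset ι) (f : ι → Set (List ℕ))
    (hfin : ∀ i ∈ t, (f i).Finite)
    (hdisj : ∀ i ∈ t, ∀ j ∈ t, i ≠ j → Disjoint (f i) (f j)) :
    (⋃ i ∈ t, f i).ncard = ∑ i ∈ t, (f i).ncard := by
  classical
  induction t using Finset.induction_on with
  | empty => simp
  | insert a t hnotmem ih =>
    rw [Finset.set_biUnion_insert, Finset.sum_insert hnotmem]
    have hfin' : (⋃ i ∈ t, f i).Finite :=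
      Set.Finite.biUnion t.finite_toSet (fun i hi => hfin i (Finset.mem_insert_of_mem hi))
    rw [Set.ncard_union_eq ?_ (hfin a (Finset.mem_insert_self a t)) hfin',
      ih (fun i hi => hfin i (Finset.mem_insert_of_mem hi))
        (fun i hi j hj => hdisj i (Finset.mem_insert_of_mem hi) j (Finset.mem_insert_of_mem hj))]
    · rw [Set.disjoint_iUnion_right]
      intro i
      rw [Set.disjoint_iUnion_right]
      intro hi
      exact hdisj a (Finset.mem_insert_self a t) i (Finset.mem_insert_of_mem hi)
        (by rintro rfl; exact hnotmem hi)

end Aux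

section Sets

/-- The set counted by `cA`. -/
def CSet (n m r s : ℕ) : Set (List ℕ) :=
  {x : List ℕ | x.length = n ∧ IsAscentSeq x ∧ Avoids x [2, 1, 0] ∧
    ascents x = m ∧ x.foldr max 0 = r ∧ x.getLast? = some s}

/-- The set counted by `dA`. -/
def DSet (n m r s : ℕ) : Set (List ℕ) :=
  {x : List ℕ | x.length = n ∧ IsAscentSeq x ∧ Avoids x [2, 1, 0] ∧
    ascents x = m ∧ x.foldr max 0 = r ∧ x.getLast? = some s ∧
    x.dropLast.getLast? = some r}

lemma cA_eq (n m r s : ℕ) : cA n m r s = (CSet n m r s).ncard := rfl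
lemma dA_eq (n m r s : ℕ) : dA n m r s = (DSet n m r s).ncard := rfl

lemma CSet_finite (n m r s : ℕ) : (CSet n m r s).Finite := by
  refine Set.Finite.subset (finite_bdd n n) ?_
  rintro x ⟨h1, h2, -⟩
  exact ⟨h1, fun a ha => h1 ▸ entry_le_length h2 a ha⟩

lemma DSet_finite (n m r s : ℕ) : (DSet n m r s).Finite := by
  refine Set.Finite.subset (CSet_finite n m r s) ?_
  rintro x ⟨h1, h2, h3, h4, h5, h6, -⟩
  exact ⟨h1, h2, h3, h4, h5, h6⟩

lemma mem_DSet_iff (k m' r' s' : ℕ) (x : List ℕ) :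
    x ∈ DSet k m' r' s' ↔ x ∈ CSet k m' r' s' ∧ x.dropLast.getLast? = some r' := by
  simp only [DSet, CSet, Set.mem_setOf_eq]
  tauto

/-- The middle set in the first recurrence: removing the last two letters `r, s`. -/
def W (n m r s : ℕ) : Set (List ℕ) :=
  {u : List ℕ | u ≠ [] ∧ u.length = n - 2 ∧ IsAscentSeq u ∧ N3 u ∧ N2 s u ∧
    u.foldr max 0 ≤ r ∧ r ≤ ascents u + 1 ∧ ascents (u ++ [r]) = m}

lemma W_finite (n m r s : ℕ) : (W n m r s).Finite := by
  refine Set.Finite.subset (finite_bdd (n-2) (n-2)) ?_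
  rintro u ⟨-, h1, h2, -⟩
  exact ⟨h1, fun a ha => h1 ▸ entry_le_length h2 a ha⟩

lemma exists_getLast? {u : List ℕ} (hu : u ≠ []) : ∃ t, u.getLast? = some t :=
  ⟨u.getLast hu, List.getLast?_eq_getLast hu⟩

lemma mem_CSet_concat {u : List ℕ} {t : ℕ} (ht : u.getLast? = some t) (k m' r' c : ℕ) :
    u ++ [c] ∈ CSet k m' r' c ↔
      u.length + 1 = k ∧ IsAscentSeq u ∧ c ≤ ascents u + 1 ∧
      N3 u ∧ N2 c u ∧ max (u.foldr max 0) c = r' ∧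
      ascents u + (if t < c then 1 else 0) = m' := by
  have hu : u ≠ [] := by rintro rfl; simp at ht
  simp only [CSet, Set.mem_setOf_eq, List.length_append, List.length_singleton,
    isAscentSeq_concat hu, avoids210_iff, N3_concat, foldr_max_concat,
    List.getLast?_concat, ascents_append u t c ht]
  tauto

lemma mem_DSet_concat {u : List ℕ} {t : ℕ} (ht : u.getLast? = some t) (k m' r' c : ℕ) :
    u ++ [c] ∈ DSet k m' r' c ↔
      u.length + 1 = k ∧ IsAscentSeq u ∧ c ≤ ascents u + 1 ∧
      N3 u ∧ N2 c u ∧ max (u.foldr max 0) c = r' ∧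
      ascents u + (if t < c then 1 else 0) = m' ∧ t = r' := by
  rw [mem_DSet_iff, mem_CSet_concat ht, List.dropLast_concat, ht, Option.some_inj]
  tauto

lemma max_eq_last_of_N2 {u : List ℕ} {i s : ℕ} (h2 : N2 s u) (hl : u.getLast? = some i)
    (hs : s < i) : u.foldr max 0 = i := by
  have hu : u ≠ [] := by rintro rfl; simp at hl
  have hmem : i ∈ u := List.mem_of_mem_getLast? hl
  have h1 : i ≤ u.foldr max 0 := le_foldr_max hmem
  rcases Nat.lt_or_ge i (u.foldr max 0) with h | h
  · exfalso
    obtain ⟨a, haeq⟩ : ∃ a, u.foldr max 0 = a := ⟨_, rfl⟩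
    rw [haeq] at h
    have ha : a ∈ u := haeq ▸ foldr_max_mem hu
    have hd : u.dropLast ++ [i] = u := List.dropLast_append_getLast? i hl
    have ha' : a ∈ u.dropLast := by
      rw [← hd] at ha
      rcases List.mem_append.mp ha with h' | h'
      · exact h'
      · simp at h'; omega
    have hsub : [a, i] <+ u := by
      rw [← hd]
      simpa using (List.singleton_sublist.mpr ha').append (List.Sublist.refl [i])
    have := h2 a i hsub h
    omega
  · omega

lemma N2_of_N3_last {u : List ℕ} {i : ℕ} (h3 : N3 u) (hl : u.getLast? = some i) : N2 i u := by
  intro a b hs hba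
  by_contra hbi
  push_neg at hbi
  have hd : u.dropLast ++ [i] = u := List.dropLast_append_getLast? i hl
  rw [← hd] at hs
  rcases sublist_concat_iff.mp hs with hs' | ⟨l'', he, hs'⟩
  · refine h3 a b i ?_ hba hbi
    rw [← hd]
    simpa using hs'.append (List.Sublist.refl [i])
  · have : b = i := by rcases l'' with _ | ⟨x, _ | _⟩ <;> simp_all
    omega

end Sets

section Decomp

lemma DSet_eq_image_W {n m r s : ℕ} (hn : 2 ≤ n) (hsr : s < r) :
    DSet n m r s = (fun u => u ++ [r, s]) '' W n m r s := by
  ext x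
  constructor
  · intro hx
    obtain ⟨hlen, hasc, havoid, hm, hmax, hlast, hlast2⟩ := hx
    have hx1 : x.dropLast ++ [s] = x := List.dropLast_append_getLast? s hlast
    have hx2 : x.dropLast.dropLast ++ [r] = x.dropLast := List.dropLast_append_getLast? r hlast2
    obtain ⟨u, hueq⟩ : ∃ u, x.dropLast.dropLast = u := ⟨_, rfl⟩
    rw [hueq] at hx2
    have hxe : (u ++ [r]) ++ [s] = x := by rw [hx2, hx1]
    refine ⟨u, ?_, by rw [← hxe]; simp⟩
    have hur : (u ++ [r]).getLast? = some r := List.getLast?_concat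
    have hmem : (u ++ [r]) ++ [s] ∈ DSet n m r s := by
      rw [hxe]; exact ⟨hlen, hasc, havoid, hm, hmax, hlast, hlast2⟩
    rw [mem_DSet_concat hur] at hmem
    obtain ⟨e1, e2, e3, e4, e5, e6, e7, -⟩ := hmem
    have hune : u ≠ [] := by
      rintro rfl
      have : r = 0 := isAscentSeq_head (u := [s]) (by
        have : IsAscentSeq ([r] ++ [s]) := by
          rw [show [r] ++ [s] = ([] ++ [r]) ++ [s] by simp, hxe]
          exact hasc
        exact this)
      omega
    obtain ⟨f1, f2⟩ := (isAscentSeq_concat hune r).mp e2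
    obtain ⟨g1, g2⟩ := (N3_concat u r).mp e4
    obtain ⟨k1, k2⟩ := (N2_concat s u r).mp e5
    rw [foldr_max_concat] at e6
    rw [if_neg (by omega)] at e7
    refine ⟨hune, ?_, f1, g1, k1, by omega, f2, by omega⟩
    simp only [List.length_append, List.length_singleton] at e1
    omega
  · rintro ⟨u, ⟨hune, hlen, hasc, h3, h2, hmaxle, hrle, hascr⟩, rfl⟩
    have hur : (u ++ [r]).getLast? = some r := List.getLast?_concat
    have hxe : u ++ [r, s] = (u ++ [r]) ++ [s] := by simp
    show u ++ [r, s] ∈ DSet n m r s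
    rw [hxe, mem_DSet_concat hur]
    refine ⟨?_, ?_, ?_, ?_, ?_, ?_, ?_, rfl⟩
    · simp only [List.length_append, List.length_singleton]; omega
    · exact (isAscentSeq_concat hune r).mpr ⟨hasc, hrle⟩
    · have := ascents_concat_le u r; omega
    · exact (N3_concat u r).mpr ⟨h3, h2.mono (le_of_lt hsr)⟩
    · refine (N2_concat s u r).mpr ⟨h2, fun a ha hra => ?_⟩
      have := le_foldr_max ha
      omega
    · rw [foldr_max_concat]; omega
    · rw [if_neg (by omega)]; omega

lemma DSet_eq_image_WA {n m r s i : ℕ} (hn : 2 ≤ n) (hsr : s < r) (hrm : r ≤ m)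
    (hsi : s < i) (hir : i ≤ r) :
    DSet (n-1) (m - if i < r then 1 else 0) i s
      = (fun u => u ++ [s]) '' {u ∈ W n m r s | u.getLast? = some i} := by
  have hm1 : 1 ≤ m := by omega
  ext y
  constructor
  · intro hy
    obtain ⟨hlen, -, -, -, -, hlast, hlast2⟩ := id hy
    have hy1 : y.dropLast ++ [s] = y := List.dropLast_append_getLast? s hlast
    obtain ⟨u, hueq⟩ : ∃ u, y.dropLast = u := ⟨_, rfl⟩
    rw [hueq] at hy1 hlast2
    refine ⟨u, ⟨?_, hlast2⟩, hy1⟩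
    rw [← hy1, mem_DSet_concat hlast2] at hy
    obtain ⟨e1, e2, e3, e4, e5, e6, e7, -⟩ := hy
    have hune : u ≠ [] := by rintro rfl; simp at hlast2
    rw [if_neg (by omega)] at e7
    have ha : ascents (u ++ [r]) = ascents u + if i < r then 1 else 0 :=
      ascents_append u i r hlast2
    refine ⟨hune, by omega, e2, e4, e5, by omega, ?_, ?_⟩
    · by_cases hd : i < r
      · rw [if_pos hd] at e7; omega
      · rw [if_neg hd] at e7; omega
    · by_cases hd : i < r
      · rw [if_pos hd] at e7 ha; omega
      · rw [if_neg hd] at e7 ha; omega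
  · rintro ⟨u, ⟨⟨hune, hlen, hasc, h3, h2, hmaxle, hrle, hascr⟩, hlast⟩, rfl⟩
    show u ++ [s] ∈ DSet (n-1) (m - if i < r then 1 else 0) i s
    rw [mem_DSet_concat hlast]
    have hle : i ≤ ascents u + 1 := last_le_ascents hasc hlast
    have hmx : u.foldr max 0 = i := max_eq_last_of_N2 h2 hlast hsi
    have ha : ascents (u ++ [r]) = ascents u + if i < r then 1 else 0 :=
      ascents_append u i r hlast
    refine ⟨by omega, hasc, by omega, h3, h2, by omega, ?_, rfl⟩
    rw [if_neg (by omega)]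
    by_cases hd : i < r
    · rw [if_pos hd] at ha ⊢; omega
    · rw [if_neg hd] at ha ⊢; omega

lemma CSet_eq_WC {n m r s i j : ℕ} (hn : 2 ≤ n) (hsr : s < r) (hrm : r ≤ m)
    (his : i ≤ s) (hij : i ≤ j) (hjr : j ≤ r) :
    CSet (n-2) (m-1) j i = {u ∈ W n m r s | u.getLast? = some i ∧ u.foldr max 0 = j} := by
  have hm1 : 1 ≤ m := by omega
  ext u
  constructor
  · rintro ⟨hlen, hasc, havoid, hm, hmax, hlast⟩
    have h3 : N3 u := (avoids210_iff u).mp havoid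
    have hune : u ≠ [] := by rintro rfl; simp at hlast
    have h2i : N2 i u := N2_of_N3_last h3 hlast
    have ha : ascents (u ++ [r]) = ascents u + if i < r then 1 else 0 :=
      ascents_append u i r hlast
    rw [if_pos (by omega)] at ha
    exact ⟨⟨hune, hlen, hasc, h3, h2i.mono his, by omega, by omega, by omega⟩, hlast, hmax⟩
  · rintro ⟨⟨hune, hlen, hasc, h3, h2, hmaxle, hrle, hascr⟩, hlast, hmax⟩
    have ha : ascents (u ++ [r]) = ascents u + if i < r then 1 else 0 :=
      ascents_append u i r hlast
    rw [if_pos (by omega)] at ha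
    exact ⟨hlen, hasc, (avoids210_iff u).mpr h3, by omega, hmax, hlast⟩

lemma W_cover {n m r s : ℕ} (hsr : s < r) :
    W n m r s = ({u ∈ W n m r s | u.getLast? = some r}
      ∪ (⋃ i ∈ Finset.Icc (s+1) (r-1), {u ∈ W n m r s | u.getLast? = some i}))
      ∪ (⋃ i ∈ Finset.Icc 0 s, ⋃ j ∈ Finset.Icc i r,
          {u ∈ W n m r s | u.getLast? = some i ∧ u.foldr max 0 = j}) := by
  ext u
  simp only [Set.mem_union, Set.mem_iUnion, Set.mem_setOf_eq, Finset.mem_Icc, exists_prop]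
  constructor
  · intro hu
    obtain ⟨hune, -, -, -, h2, hmaxle, -, -⟩ := id hu
    obtain ⟨t, hlast⟩ := exists_getLast? hune
    have htm : t ≤ u.foldr max 0 := le_foldr_max (List.mem_of_mem_getLast? hlast)
    rcases Nat.lt_or_ge s t with hst | hts
    · rcases Nat.lt_or_ge t r with htr | hrt
      · exact Or.inl (Or.inr ⟨t, ⟨by omega, by omega⟩, hu, hlast⟩)
      · have : t = r := by omega
        exact Or.inl (Or.inl ⟨hu, this ▸ hlast⟩)
    · exact Or.inr ⟨t, ⟨by omega, by omega⟩, u.foldr max 0, ⟨htm, hmaxle⟩, hu, hlast, rfl⟩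
  · rintro ((⟨hu, -⟩ | ⟨i, -, hu, -⟩) | ⟨i, -, j, -, hu, -⟩) <;> exact hu

lemma CD_eq {n m r : ℕ} (hn : 2 ≤ n) (hrm : r ≤ m) :
    CSet n m r r \ DSet n m r r
      = (fun u => u ++ [r]) '' (⋃ i ∈ Finset.range r, ⋃ j ∈ Finset.Icc i r,
          CSet (n-1) (m-1) j i) := by
  ext x
  simp only [Set.mem_diff, Set.mem_image, Set.mem_iUnion, Finset.mem_range, Finset.mem_Icc,
    exists_prop]
  constructor
  · rintro ⟨hC, hD⟩
    obtain ⟨hlen, hasc, havoid, hm, hmax, hlast⟩ := id hC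
    have hx1 : x.dropLast ++ [r] = x := List.dropLast_append_getLast? r hlast
    obtain ⟨u, hueq⟩ : ∃ u, x.dropLast = u := ⟨_, rfl⟩
    rw [hueq] at hx1
    have hune : u ≠ [] := by
      rintro rfl
      rw [← hx1] at hlen
      simp at hlen
      omega
    obtain ⟨t, htlast⟩ := exists_getLast? hune
    have htr : t ≠ r := by
      intro h
      apply hD
      rw [mem_DSet_iff]
      refine ⟨hC, ?_⟩
      rw [← hx1, List.dropLast_concat, htlast, h]
    rw [← hx1, mem_CSet_concat htlast] at hC
    obtain ⟨e1, e2, e3, e4, e5, e6, e7⟩ := hC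
    have htm : t ≤ u.foldr max 0 := le_foldr_max (List.mem_of_mem_getLast? htlast)
    have htr' : t < r := by omega
    rw [if_pos htr'] at e7
    refine ⟨u, ⟨t, by omega, u.foldr max 0, ⟨htm, by omega⟩,
      by omega, e2, (avoids210_iff u).mpr e4, by omega, rfl, htlast⟩, hx1⟩
  · rintro ⟨u, ⟨i, hir, j, ⟨hij, hjr⟩, hlen, hasc, havoid, hm, hmax, hlast⟩, rfl⟩
    have hm1 : 1 ≤ m := by omega
    have h3 : N3 u := (avoids210_iff u).mp havoid
    constructor
    · rw [mem_CSet_concat hlast]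
      refine ⟨by omega, hasc, by omega, h3, ?_, by omega, ?_⟩
      · intro a b hs hba
        have : b ∈ u := hs.subset (by simp)
        have := le_foldr_max this
        omega
      · rw [if_pos (by omega)]; omega
    · rw [mem_DSet_iff]
      rintro ⟨-, hd⟩
      rw [List.dropLast_concat, hlast] at hd
      simp at hd
      omega

end Decomp

section Count

lemma ncardA {n m r s : ℕ} (hn : 2 ≤ n) (hsr : s < r) (hrm : r ≤ m) :
    ({u ∈ W n m r s | u.getLast? = some r}).ncard = dA (n - 1) m r s := by
  have hA := DSet_eq_image_WA (n := n) (m := m) (s := s) hn hsr hrm hsr (le_refl r)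
  rw [if_neg (lt_irrefl r), Nat.sub_zero] at hA
  rw [dA_eq, hA, Set.ncard_image_of_injective _ (List.append_left_injective [s])]

lemma ncardB {n m r s : ℕ} (hn : 2 ≤ n) (hsr : s < r) (hrm : r ≤ m) :
    (⋃ i ∈ Finset.Icc (s + 1) (r - 1), {u ∈ W n m r s | u.getLast? = some i}).ncard
      = ∑ i ∈ Finset.Icc (s + 1) (r - 1), dA (n - 1) (m - 1) i s := by
  rw [ncard_biUnion _ _ (fun i _ => (W_finite n m r s).subset (Set.sep_subset _ _)) ?_]
  · refine Finset.sum_congr rfl fun i hi => ?_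
    simp only [Finset.mem_Icc] at hi
    have hA := DSet_eq_image_WA (n := n) (m := m) (s := s) hn hsr hrm
      (show s < i by omega) (show i ≤ r by omega)
    rw [if_pos (by omega)] at hA
    rw [dA_eq, hA, Set.ncard_image_of_injective _ (List.append_left_injective [s])]
  · intro i _ j _ hij
    rw [Set.disjoint_left]
    rintro u ⟨-, h1⟩ ⟨-, h2⟩
    rw [h1] at h2
    simp at h2
    exact hij h2

lemma ncardC {n m r s : ℕ} (hn : 2 ≤ n) (hsr : s < r) (hrm : r ≤ m) :
    (⋃ i ∈ Finset.Icc 0 s, ⋃ j ∈ Finset.Icc i r,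
        {u ∈ W n m r s | u.getLast? = some i ∧ u.foldr max 0 = j}).ncard
      = ∑ i ∈ Finset.Icc 0 s, ∑ j ∈ Finset.Icc i r, cA (n - 2) (m - 1) j i := by
  rw [ncard_biUnion _ _
    (fun i _ => (W_finite n m r s).subset (Set.iUnion₂_subset fun j _ => Set.sep_subset _ _)) ?_]
  · refine Finset.sum_congr rfl fun i hi => ?_
    simp only [Finset.mem_Icc] at hi
    rw [ncard_biUnion _ _ (fun j _ => (W_finite n m r s).subset (Set.sep_subset _ _)) ?_]
    · refine Finset.sum_congr rfl fun j hj => ?_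
      simp only [Finset.mem_Icc] at hj
      rw [cA_eq, CSet_eq_WC hn hsr hrm (by omega) (by omega) (by omega)]
    · intro j _ j' _ hjj
      rw [Set.disjoint_left]
      rintro u ⟨-, -, h1⟩ ⟨-, -, h2⟩
      rw [h1] at h2
      exact hjj h2
  · intro i _ i' _ hii
    rw [Set.disjoint_left]
    intro u h1 h2
    simp only [Set.mem_iUnion, Finset.mem_Icc, Set.mem_setOf_eq, exists_prop] at h1 h2
    obtain ⟨j, -, -, hl1, -⟩ := h1
    obtain ⟨j', -, -, hl2, -⟩ := h2
    rw [hl1] at hl2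
    simp at hl2
    exact hii hl2

lemma part1 {n m r s : ℕ} (hn : 2 ≤ n) (hsr : s < r) (hrm : r ≤ m) :
    dA n m r s
      = dA (n - 1) m r s + ∑ i ∈ Finset.Icc (s + 1) (r - 1), dA (n - 1) (m - 1) i s
        + ∑ i ∈ Finset.Icc 0 s, ∑ j ∈ Finset.Icc i r, cA (n - 2) (m - 1) j i := by
  have hWfin := W_finite n m r s
  have hAfin : ({u ∈ W n m r s | u.getLast? = some r}).Finite :=
    hWfin.subset (Set.sep_subset _ _)
  have hBUfin : (⋃ i ∈ Finset.Icc (s+1) (r-1), {u ∈ W n m r s | u.getLast? = some i}).Finite :=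
    hWfin.subset (Set.iUnion₂_subset fun i _ => Set.sep_subset _ _)
  have hCUUfin : (⋃ i ∈ Finset.Icc 0 s, ⋃ j ∈ Finset.Icc i r,
      {u ∈ W n m r s | u.getLast? = some i ∧ u.foldr max 0 = j}).Finite :=
    hWfin.subset (Set.iUnion₂_subset fun i _ =>
      Set.iUnion₂_subset fun j _ => Set.sep_subset _ _)
  rw [dA_eq, DSet_eq_image_W hn hsr,
    Set.ncard_image_of_injective _ (List.append_left_injective [r, s]),
    W_cover hsr]
  rw [Set.ncard_union_eq ?_ (hAfin.union hBUfin) hCUUfin,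
    Set.ncard_union_eq ?_ hAfin hBUfin,
    ncardA hn hsr hrm, ncardB hn hsr hrm, ncardC hn hsr hrm]
  · -- Disjoint A (⋃ B)
    rw [Set.disjoint_left]
    intro u hu hu'
    have h2 : u.getLast? = some r := hu.2
    simp only [Set.mem_iUnion, Set.mem_setOf_eq, exists_prop] at hu'
    obtain ⟨i, hi, -, hlast⟩ := hu'
    have := (Finset.mem_Icc.mp hi).2
    rw [h2] at hlast
    simp at hlast
    omega
  · -- Disjoint (A ∪ ⋃ B) (⋃⋃ C)
    rw [Set.disjoint_left]
    intro u hu hu'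
    obtain ⟨i, hi, hl⟩ : ∃ i, i ≤ s ∧ u.getLast? = some i := by
      simp only [Set.mem_iUnion, Set.mem_setOf_eq, exists_prop] at hu'
      obtain ⟨i, hi, j, hj, -, hl, -⟩ := hu'
      exact ⟨i, (Finset.mem_Icc.mp hi).2, hl⟩
    rw [Set.mem_union] at hu
    rcases hu with hA | hB
    · have h2 : u.getLast? = some r := hA.2
      rw [hl] at h2
      simp at h2
      omega
    · simp only [Set.mem_iUnion, Set.mem_setOf_eq, exists_prop] at hB
      obtain ⟨i', hi', -, hl'⟩ := hB
      have := (Finset.mem_Icc.mp hi').1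
      rw [hl] at hl'
      simp at hl'
      omega

lemma ncardC2 {n m r : ℕ} :
    (⋃ i ∈ Finset.range r, ⋃ j ∈ Finset.Icc i r, CSet (n - 1) (m - 1) j i).ncard
      = ∑ i ∈ Finset.range r, ∑ j ∈ Finset.Icc i r, cA (n - 1) (m - 1) j i := by
  rw [ncard_biUnion _ _ ?_ ?_]
  · refine Finset.sum_congr rfl fun i hi => ?_
    rw [ncard_biUnion _ _ ?_ ?_]
    · exact Finset.sum_congr rfl fun j hj => (cA_eq (n-1) (m-1) j i).symm
    · exact fun j _ => CSet_finite (n-1) (m-1) j i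
    · intro j _ j' _ hjj
      rw [Set.disjoint_left]
      rintro u ⟨-, -, -, -, h1, -⟩ ⟨-, -, -, -, h2, -⟩
      exact hjj (h1.symm.trans h2)
  · exact fun i _ => Set.Finite.biUnion (Finset.finite_toSet _)
      (fun j _ => CSet_finite (n-1) (m-1) j i)
  · intro i _ i' _ hii
    rw [Set.disjoint_left]
    intro u h1 h2
    simp only [Set.mem_iUnion, exists_prop] at h1 h2
    obtain ⟨j, -, -, -, -, -, -, hl1⟩ := h1
    obtain ⟨j', -, -, -, -, -, -, hl2⟩ := h2
    rw [hl1] at hl2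
    simp at hl2
    exact hii hl2

lemma part2 {n m r : ℕ} (hn : 2 ≤ n) (hrm : r ≤ m) :
    cA n m r r
      = dA n m r r + ∑ i ∈ Finset.range r, ∑ j ∈ Finset.Icc i r, cA (n - 1) (m - 1) j i := by
  have hsub : DSet n m r r ⊆ CSet n m r r := fun x hx => ((mem_DSet_iff _ _ _ _ x).mp hx).1
  have h1 : (CSet n m r r \ DSet n m r r).ncard + (DSet n m r r).ncard
      = (CSet n m r r).ncard :=
    Set.ncard_diff_add_ncard_of_subset hsub (CSet_finite _ _ _ _)
  rw [cA_eq, dA_eq, ← h1, CD_eq hn hrm,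
    Set.ncard_image_of_injective _ (List.append_left_injective [r]),
    ncardC2]
  omega

end Count

/-- For `n ≥ 2`:
`d_{n,m,r,s} = d_{n-1,m,r,s} + Σ_{i=s+1}^{r-1} d_{n-1,m-1,i,s} + Σ_{i=0}^{s} Σ_{j=i}^{r} c_{n-2,m-1,j,i}`
whenever `0 ≤ s < r ≤ m`, and
`c_{n,m,r,r} = d_{n,m,r,r} + Σ_{i=0}^{r-1} Σ_{j=i}^{r} c_{n-1,m-1,j,i}` whenever `0 ≤ r ≤ m`. -/
theorem dA_cA_recurrences (n : ℕ) (hn : 2 ≤ n) :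
    (∀ m r s : ℕ, s < r → r ≤ m →
      dA n m r s
        = dA (n - 1) m r s + ∑ i ∈ Finset.Icc (s + 1) (r - 1), dA (n - 1) (m - 1) i s
          + ∑ i ∈ Finset.Icc 0 s, ∑ j ∈ Finset.Icc i r, cA (n - 2) (m - 1) j i)
    ∧ (∀ m r : ℕ, r ≤ m →
      cA n m r r
        = dA n m r r + ∑ i ∈ Finset.range r, ∑ j ∈ Finset.Icc i r, cA (n - 1) (m - 1) j i) :=
  ⟨fun _ _ _ hsr hrm => part1 hn hsr hrm, fun _ _ hrm => part2 hn hrm⟩
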